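/- Every arboreal truncation of a simple graph X with no isolated vertices is class I, where an arboreal truncation is a generalized truncation in which every constituent graph con(v) is a forest. -/

import Mathlib

open SimpleGraph

/-- A proper edge coloring of a simple graph: distinct edges sharing a vertex
receive distinct colors. -/
def IsProperEdgeColoring {V α : Type*} (G : SimpleGraph V) (C : Sym2 V → α) : Prop :=
  ∀ e₁ ∈ G.edgeSet, ∀ e₂ ∈ G.edgeSet, e₁ ≠ e₂ → (∃ v, v ∈ e₁ ∧ v ∈ e₂) → C e₁ ≠ C e₂

/-- The chromatic index: least number of colors admitting a proper edge coloring. -/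
noncomputable def chromIndex {V : Type*} (G : SimpleGraph V) : ℕ :=
  sInf {k | ∃ C : Sym2 V → Fin k, IsProperEdgeColoring G C}

/-- Degree of a vertex. -/
noncomputable def deg {V : Type*} (G : SimpleGraph V) (v : V) : ℕ :=
  (G.neighborSet v).ncard

/-- Maximum degree. -/
noncomputable def maxDeg {V : Type*} (G : SimpleGraph V) : ℕ :=
  sSup (Set.range (deg G))

/-- A graph is class I if its chromatic index equals its maximum degree. -/
def ClassI {V : Type*} (G : SimpleGraph V) : Prop := chromIndex G = maxDeg G

/-- The sun over `G`: attach one pendant edge at each vertex of `G`. -/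
def sun {V : Type*} (G : SimpleGraph V) : SimpleGraph (V ⊕ V) :=
  SimpleGraph.fromRel (fun x y =>
    (∃ u v, G.Adj u v ∧ x = Sum.inl u ∧ y = Sum.inl v) ∨
    (∃ v, x = Sum.inl v ∧ y = Sum.inr v))

/-- The pendant edge of the sun attached at vertex `v`. -/
def pendant {V : Type*} (v : V) : Sym2 (V ⊕ V) := s(Sum.inl v, Sum.inr v)

/-- The generalized truncation of `X` determined by the graph `H` on the darts of `X`:
each dart is joined to its reverse dart (the matching `M_F`) and the edges of `H`
(the constituent edges) are added. -/
def trunc {V : Type*} (X : SimpleGraph V) (H : SimpleGraph X.Dart) : SimpleGraph X.Dart :=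
  SimpleGraph.fromRel (fun d d' => d' = d.symm ∨ H.Adj d d')

/-- The constituent graph `H` respects clusters: its edges join only darts with the
same initial vertex. -/
def RespectsClusters {V : Type*} (X : SimpleGraph V) (H : SimpleGraph X.Dart) : Prop :=
  ∀ d d' : X.Dart, H.Adj d d' → d.toProd.1 = d'.toProd.1

/-- The cluster at `v`: darts with initial vertex `v`. -/
def cluster {V : Type*} (X : SimpleGraph V) (v : V) : Set X.Dart :=
  {d : X.Dart | d.toProd.1 = v}

/-- The constituent at `v`, as a graph in its own right. -/
def constituent {V : Type*} (X : SimpleGraph V) (H : SimpleGraph X.Dart) (v : V) :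
    SimpleGraph (cluster X v) := H.induce (cluster X v)

/-- The complete truncation: every constituent is the complete graph on its cluster. -/
def completeTrunc {V : Type*} (X : SimpleGraph V) : SimpleGraph X.Dart :=
  trunc X (SimpleGraph.fromRel (fun d d' => d.toProd.1 = d'.toProd.1))

/-- `X` has no isolated vertices. -/
def NoIsolated {V : Type*} (X : SimpleGraph V) : Prop := ∀ v : V, ∃ w, X.Adj v w

/-- The number of edges of `X` of color `k` incident with `v`. -/
noncomputable def colorCountAt {V α : Type*} (X : SimpleGraph V) (c : Sym2 V → α)
    (v : V) (k : α) : ℕ :=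
  {e | e ∈ X.edgeSet ∧ v ∈ e ∧ c e = k}.ncard

/-- An edge coloring (not necessarily proper) is parity-balanced if for every vertex `v`
and every color `k`, the number of edges of color `k` incident with `v` has the same
parity as the degree of `v`. -/
def ParityBalanced {V : Type*} {m : ℕ} (X : SimpleGraph V) (c : Sym2 V → Fin m) : Prop :=
  ∀ (v : V) (k : Fin m), colorCountAt X c v k % 2 = deg X v % 2

/-- The edges of the sun centered at the constituent at `v`: the constituent edges
at `v` together with the matching edges incident with the cluster at `v`. -/
def sunEdges {V : Type*} (X : SimpleGraph V) (H : SimpleGraph X.Dart) (v : V) :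
    Set (Sym2 X.Dart) :=
  {e | e ∈ (trunc X H).edgeSet ∧ ∃ d : X.Dart, d ∈ e ∧ d.toProd.1 = v}

/-- `H` describes a cyclic truncation of `X`: it respects clusters and every
constituent is a cycle on its cluster. -/
def CyclicConstituents {V : Type*} (X : SimpleGraph V) (H : SimpleGraph X.Dart) : Prop :=
  RespectsClusters X H ∧ (∀ d : X.Dart, deg H d = 2) ∧
    ∀ v : V, (constituent X H v).Connected


section Aux

open SimpleGraph

lemma exists_leaf {D : Type*} [Finite D] (H : SimpleGraph D) (hac : H.IsAcyclic)
    {x y : D} (hxy : H.Adj x y) : ∃ a c, H.Adj a c ∧ ∀ u, H.Adj a u → u = c := by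
  cases nonempty_fintype D
  classical
  set S : Set ℕ := {n | ∃ (a b : D) (p : H.Walk a b), p.IsPath ∧ p.length = n} with hS
  have h1 : (1 : ℕ) ∈ S := by
    refine ⟨x, y, Walk.cons hxy Walk.nil, ?_, by simp⟩
    simp [Walk.cons_isPath_iff, hxy.ne]
  have hbdd : BddAbove S := by
    refine ⟨Fintype.card D, fun n hn => ?_⟩
    obtain ⟨a, b, p, hp, rfl⟩ := hn
    exact hp.length_lt.le
  have hmem := Nat.sSup_mem ⟨1, h1⟩ hbdd
  set N := sSup S with hN
  obtain ⟨a, b, p, hp, hlen⟩ := hmem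
  cases p with
  | nil =>
      exfalso
      have := le_csSup hbdd h1
      simp at hlen
      omega
  | @cons _ c _ h q =>
      rw [Walk.cons_isPath_iff] at hp
      refine ⟨a, c, h, fun u hu => ?_⟩
      by_cases husup : u ∈ (Walk.cons h q).support
      · rw [Walk.support_cons] at husup
        have hu' : u ∈ q.support := by
          rcases List.mem_cons.mp husup with h' | h'
          · exact absurd h' hu.ne'
          · exact h'
        have hr : (q.takeUntil u hu').IsPath := hp.1.takeUntil hu'
        have hw1 : (Walk.cons h (q.takeUntil u hu')).IsPath := by
          rw [Walk.cons_isPath_iff]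
          exact ⟨hr, fun hmem' => hp.2 (q.support_takeUntil_subset hu' hmem')⟩
        have hw2 : (Walk.cons hu Walk.nil).IsPath := by
          simp [Walk.cons_isPath_iff, hu.ne]
        have := hac.path_unique ⟨Walk.cons h (q.takeUntil u hu'), hw1⟩ ⟨Walk.cons hu Walk.nil, hw2⟩
        have hsup := congrArg (fun P : H.Path a u => P.1.support) this
        simp only [Walk.support_cons, Walk.support_nil] at hsup
        have h2 : (q.takeUntil u hu').support = [u] := by
          simpa using hsup
        have h3 := (q.takeUntil u hu').support_eq_cons
        rw [h2] at h3
        simpa using h3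
      · exfalso
        have hext : (Walk.cons hu.symm (Walk.cons h q)).IsPath := by
          rw [Walk.cons_isPath_iff]
          exact ⟨by rw [Walk.cons_isPath_iff]; exact hp, husup⟩
        have : (Walk.cons h q).length + 1 ∈ S := ⟨u, b, _, hext, by simp⟩
        have hle := le_csSup hbdd this
        rw [hlen] at hle
        omega

lemma acyclic_anti {D : Type*} {G₁ G₂ : SimpleGraph D} (h : G₁ ≤ G₂) (hac : G₂.IsAcyclic) :
    G₁.IsAcyclic := fun _v c hc => hac (c.mapLe h) (hc.mapLe h)

lemma forest_coloring {V : Type*} (X : SimpleGraph V) [Finite X.Dart] :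
    ∀ (n : ℕ) (H : SimpleGraph X.Dart) (k : ℕ),
      RespectsClusters X H → (∀ v, (constituent X H v).IsAcyclic) →
      (∀ d, deg H d ≤ k) → H.edgeSet.ncard ≤ n →
      ∃ C : Sym2 X.Dart → ℕ, IsProperEdgeColoring H C ∧ ∀ e ∈ H.edgeSet, C e < k := by
  classical
  intro n
  induction n with
  | zero =>
      intro H k _ _ _ hcard
      have hE : H.edgeSet = ∅ := by
        rw [← Set.ncard_eq_zero (Set.toFinite _)]; omega
      exact ⟨fun _ => 0, fun e₁ h₁ => by rw [hE] at h₁; exact absurd h₁ (Set.notMem_empty _),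
        fun e he => by rw [hE] at he; exact absurd he (Set.notMem_empty _)⟩
  | succ n ih =>
      intro H k hH hfor hdeg hcard
      by_cases hE : H.edgeSet = ∅
      · exact ⟨fun _ => 0, fun e₁ h₁ => by rw [hE] at h₁; exact absurd h₁ (Set.notMem_empty _),
          fun e he => by rw [hE] at he; exact absurd he (Set.notMem_empty _)⟩
      obtain ⟨e₀, he₀⟩ := Set.nonempty_iff_ne_empty.mpr hE
      obtain ⟨d, d', hdd'⟩ : ∃ d d' : X.Dart, H.Adj d d' := by
        revert he₀
        induction e₀ using Sym2.ind with
        | _ p q => exact fun he₀ => ⟨p, q, H.mem_edgeSet.mp he₀⟩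
      set v := d.toProd.1 with hv
      have hdcl : d ∈ cluster X v := rfl
      have hd'cl : d' ∈ cluster X v := (hH d d' hdd').symm
      have hadjc : (constituent X H v).Adj ⟨d, hdcl⟩ ⟨d', hd'cl⟩ := hdd'
      obtain ⟨⟨a, hav⟩, ⟨c, hcv⟩, hlac, huniq⟩ :=
        exists_leaf (constituent X H v) (hfor v) hadjc
      have hac' : H.Adj a c := hlac
      have huniq' : ∀ u, H.Adj a u → u = c := by
        intro u hu
        have hucl : u ∈ cluster X v := (hH a u hu).symm.trans hav
        have := huniq ⟨u, hucl⟩ (show (constituent X H v).Adj ⟨a, hav⟩ ⟨u, hucl⟩ from hu)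
        exact congrArg Subtype.val this
      set H' := H.deleteEdges {s(a, c)} with hH'def
      have hle : H' ≤ H := SimpleGraph.deleteEdges_le _
      have hH' : RespectsClusters X H' := fun p q hpq => hH p q (hle hpq)
      have hfor' : ∀ w, (constituent X H' w).IsAcyclic := by
        intro w
        refine acyclic_anti (fun p q hpq => ?_) (hfor w)
        exact hle hpq
      have hdeg' : ∀ p, deg H' p ≤ k := fun p =>
        le_trans (Set.ncard_le_ncard (fun u hu => hle hu) (Set.toFinite _)) (hdeg p)
      have hmemac : s(a, c) ∈ H.edgeSet := hac'
      have hcard' : H'.edgeSet.ncard ≤ n := by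
        rw [hH'def, SimpleGraph.edgeSet_deleteEdges]
        have h1 : (H.edgeSet \ {s(a, c)}).ncard = H.edgeSet.ncard - 1 :=
          Set.ncard_diff_singleton_of_mem hmemac
        omega
      obtain ⟨C', hC'p, hC'b⟩ := ih H' k hH' hfor' hdeg' hcard'
      have hk1 : 1 ≤ k := by
        have h1 : 1 ≤ deg H c :=
          (Set.ncard_pos (Set.toFinite _)).mpr ⟨a, hac'.symm⟩
        exact le_trans h1 (hdeg c)
      set NB : Finset ℕ :=
        ((H.neighborSet c).toFinite.toFinset.erase a).image (fun u => C' s(c, u)) with hNB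
      have hNBcard : NB.card < k := by
        have h1 : NB.card ≤ ((H.neighborSet c).toFinite.toFinset.erase a).card := by
          rw [hNB]; exact Finset.card_image_le
        have h2 : ((H.neighborSet c).toFinite.toFinset.erase a).card
            = (H.neighborSet c).toFinite.toFinset.card - 1 :=
          Finset.card_erase_of_mem ((Set.Finite.mem_toFinset _).mpr hac'.symm)
        have h3 : (H.neighborSet c).toFinite.toFinset.card = deg H c :=
          (Set.ncard_eq_toFinset_card _ _).symm
        have h4 := hdeg c
        have h5 : 1 ≤ deg H c := (Set.ncard_pos (Set.toFinite _)).mpr ⟨a, hac'.symm⟩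
        omega
      have hns : ¬ (Finset.range k ⊆ NB) := fun hsub => by
        have := Finset.card_le_card hsub
        rw [Finset.card_range] at this
        omega
      obtain ⟨x, hx1, hx2⟩ := Finset.not_subset.mp hns
      have hxk : x < k := Finset.mem_range.mp hx1
      have key : ∀ e ∈ H.edgeSet, e ≠ s(a, c) → (∃ w, w ∈ s(a, c) ∧ w ∈ e) → x ≠ C' e := by
        intro e he hne hsh
        obtain ⟨w, hw1, hw2⟩ := hsh
        rw [Sym2.mem_iff] at hw1
        obtain ⟨u, rfl⟩ := Sym2.mem_iff_exists.mp hw2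
        have hadj : H.Adj w u := H.mem_edgeSet.mp he
        rcases hw1 with rfl | rfl
        · exact absurd (by rw [huniq' u hadj]) hne
        · have hua : u ≠ a := by
            rintro rfl
            exact hne (Sym2.eq_swap)
          have hmemNB : C' s(w, u) ∈ NB :=
            Finset.mem_image.mpr ⟨u, Finset.mem_erase.mpr
              ⟨hua, (Set.Finite.mem_toFinset _).mpr hadj⟩, rfl⟩
          intro hxeq
          exact hx2 (hxeq ▸ hmemNB)
      refine ⟨fun e => if e = s(a, c) then x else C' e, ?_, ?_⟩
      · intro e₁ h₁ e₂ h₂ hne hsh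
        by_cases q₁ : e₁ = s(a, c) <;> by_cases q₂ : e₂ = s(a, c)
        · exact absurd (q₁.trans q₂.symm) hne
        · simp only [if_pos q₁, if_neg q₂]
          refine key e₂ h₂ q₂ ?_
          obtain ⟨w, hw1, hw2⟩ := hsh
          exact ⟨w, q₁ ▸ hw1, hw2⟩
        · simp only [if_neg q₁, if_pos q₂]
          refine (key e₁ h₁ q₁ ?_).symm
          obtain ⟨w, hw1, hw2⟩ := hsh
          exact ⟨w, q₂ ▸ hw2, hw1⟩
        · simp only [if_neg q₁, if_neg q₂]
          have m₁ : e₁ ∈ H'.edgeSet := by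
            rw [hH'def, SimpleGraph.edgeSet_deleteEdges]
            exact ⟨h₁, by simpa using q₁⟩
          have m₂ : e₂ ∈ H'.edgeSet := by
            rw [hH'def, SimpleGraph.edgeSet_deleteEdges]
            exact ⟨h₂, by simpa using q₂⟩
          exact hC'p e₁ m₁ e₂ m₂ hne hsh
      · intro e he
        by_cases q : e = s(a, c)
        · simpa [if_pos q] using hxk
        · have m : e ∈ H'.edgeSet := by
            rw [hH'def, SimpleGraph.edgeSet_deleteEdges]
            exact ⟨he, by simpa using q⟩
          simpa [if_neg q] using hC'b e m

end Aux

/-- every arboreal truncation is class I. -/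
theorem stmt15 {V : Type*} [Fintype V] (X : SimpleGraph V) (hX : NoIsolated X)
    (H : SimpleGraph X.Dart) (hH : RespectsClusters X H)
    (hforest : ∀ v : V, (constituent X H v).IsAcyclic) :
    ClassI (trunc X H) := by
  classical
  haveI : Finite X.Dart := Finite.of_injective _ SimpleGraph.Dart.toProd_injective
  set G := trunc X H with hG
  have hGadj : ∀ d u : X.Dart, G.Adj d u ↔ (u = d.symm ∨ H.Adj d u) := by
    intro d u
    simp only [hG, trunc, SimpleGraph.fromRel_adj]
    constructor
    · rintro ⟨hne, (h | h) | (h | h)⟩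
      · exact Or.inl h
      · exact Or.inr h
      · exact Or.inl (by rw [h, SimpleGraph.Dart.symm_symm])
      · exact Or.inr h.symm
    · rintro (rfl | h)
      · exact ⟨Ne.symm (SimpleGraph.Dart.symm_ne d), Or.inl (Or.inl rfl)⟩
      · exact ⟨h.ne, Or.inl (Or.inr h)⟩
  have hHnotsymm : ∀ d : X.Dart, ¬ H.Adj d d.symm := by
    intro d hd
    have h1 := hH d d.symm hd
    have h2 : d.toProd.1 = d.toProd.2 := by simpa using h1
    have h3 := d.adj
    rw [h2] at h3
    exact X.irrefl h3
  have hNS : ∀ d, G.neighborSet d = insert d.symm (H.neighborSet d) := by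
    intro d
    ext u
    simp [SimpleGraph.mem_neighborSet, Set.mem_insert_iff, hGadj]
  have hdegG : ∀ d, deg G d = deg H d + 1 := by
    intro d
    rw [deg, hNS d, Set.ncard_insert_of_notMem (a := d.symm) (s := H.neighborSet d)
      (fun hmem => hHnotsymm d hmem) (Set.toFinite _)]
    rfl
  have hbd : ∀ b, (∃ C : Sym2 X.Dart → Fin b, IsProperEdgeColoring G C) → maxDeg G ≤ b := by
    rintro b ⟨C, hC⟩
    refine csSup_le' ?_
    rintro y ⟨d, rfl⟩
    have hinj : Function.Injective (fun u : G.neighborSet d => C s(d, u.1)) := by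
      rintro ⟨u₁, hu₁⟩ ⟨u₂, hu₂⟩ heq
      by_contra hne'
      have hne2 : u₁ ≠ u₂ := fun h => hne' (Subtype.ext h)
      have hEne : s(d, u₁) ≠ s(d, u₂) := fun h => hne2 (Sym2.congr_right.mp h)
      exact hC s(d, u₁) (G.mem_edgeSet.mpr hu₁) s(d, u₂)
        (G.mem_edgeSet.mpr hu₂) hEne
        ⟨d, by simp [Sym2.mem_iff], by simp [Sym2.mem_iff]⟩ heq
    calc deg G d = Nat.card (G.neighborSet d) := (Nat.card_coe_set_eq _).symm
      _ ≤ Nat.card (Fin b) := Nat.card_le_card_of_injective _ hinj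
      _ = b := by simp
  have hclass : ∀ e, e ∈ G.edgeSet → e ∉ H.edgeSet → ∃ p : X.Dart, e = s(p, p.symm) := by
    intro e
    induction e using Sym2.ind with
    | _ p q =>
      intro he hn
      rcases (hGadj p q).mp (G.mem_edgeSet.mp he) with h | h
      · exact ⟨p, by rw [h]⟩
      · exact absurd (H.mem_edgeSet.mpr h) hn
  have hmk : ∃ C : Sym2 X.Dart → Fin (maxDeg G), IsProperEdgeColoring G C := by
    rcases isEmpty_or_nonempty X.Dart with hD | hD
    · haveI : IsEmpty (Sym2 X.Dart) := ⟨fun e => Sym2.ind (fun x _ => isEmptyElim x) e⟩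
      exact ⟨fun e => isEmptyElim e, fun e₁ h₁ => isEmptyElim e₁⟩
    · set K := maxDeg G with hK
      have hbdd : BddAbove (Set.range (deg G)) := (Set.finite_range _).bddAbove
      have hdle : ∀ d, deg G d ≤ K := fun d => le_csSup hbdd ⟨d, rfl⟩
      obtain ⟨d₀⟩ := hD
      have hK1 : 1 ≤ K := le_trans (by rw [hdegG d₀]; omega) (hdle d₀)
      have hdegH : ∀ d, deg H d ≤ K - 1 := by
        intro d
        have := hdle d
        rw [hdegG d] at this
        omega
      obtain ⟨C', hC'p, hC'b⟩ :=
        forest_coloring X (H.edgeSet.ncard) H (K - 1) hH hforest hdegH le_rfl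
      refine ⟨fun e => if he : e ∈ H.edgeSet then
        ⟨C' e + 1, by have := hC'b e he; omega⟩ else ⟨0, by omega⟩, ?_⟩
      intro e₁ h₁ e₂ h₂ hne hsh
      by_cases q₁ : e₁ ∈ H.edgeSet <;> by_cases q₂ : e₂ ∈ H.edgeSet
      · intro heq
        simp only [dif_pos q₁, dif_pos q₂, Fin.mk.injEq] at heq
        exact hC'p e₁ q₁ e₂ q₂ hne hsh (by omega)
      · intro heq
        simp only [dif_pos q₁, dif_neg q₂, Fin.mk.injEq] at heq
        omega
      · intro heq
        simp only [dif_neg q₁, dif_pos q₂, Fin.mk.injEq] at heq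
        omega
      · exfalso
        obtain ⟨p, rfl⟩ := hclass e₁ h₁ q₁
        obtain ⟨r, rfl⟩ := hclass e₂ h₂ q₂
        obtain ⟨w, hw1, hw2⟩ := hsh
        rw [Sym2.mem_iff] at hw1 hw2
        apply hne
        rcases hw1 with rfl | rfl
        · rcases hw2 with rfl | rfl
          · rfl
          · rw [Sym2.eq_swap]
            simp [SimpleGraph.Dart.symm_symm]
        · rcases hw2 with h | h
          · rw [← h]
            rw [Sym2.eq_swap]
            simp [SimpleGraph.Dart.symm_symm]
          · have hpr : p = r := by
              have := congrArg SimpleGraph.Dart.symm h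
              simpa using this
            rw [hpr]
  exact le_antisymm (Nat.sInf_le hmk) (le_csInf ⟨_, hmk⟩ fun b hb => hbd b hb)
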